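/- arXiv:1305.5928 — 2 statements merged into one kernel-verified Lean document; each statement's English description precedes it below -/
import Mathlib

section
/- Let F be the free group on three generators a, b, c, and consider the relators r₁ = a·c·b⁻¹·a⁻¹·c⁻¹·a·c·b·c⁻¹, r₂ = a·a·b⁻¹·c·b·a·b·c⁻¹, r₃ = a·b·a⁻¹·b⁻¹·c·c. Then the presented group with generators a, b, c and relator set {r₁, r₂, r₃, a, b³} (i.e., the group obtained from ⟨a,b,c | r₁, r₂, r₃⟩ by adding the relations a = 1 and b³ = 1) is isomorphic to the dihedral group of order 6. -/
namespace Stmt0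

/-- The generator `a` of the free group on three generators. -/
def a : FreeGroup (Fin 3) := FreeGroup.of 0
/-- The generator `b` of the free group on three generators. -/
def b : FreeGroup (Fin 3) := FreeGroup.of 1
/-- The generator `c` of the free group on three generators. -/
def c : FreeGroup (Fin 3) := FreeGroup.of 2

/-- The relator `r₁ = a·c·b⁻¹·a⁻¹·c⁻¹·a·c·b·c⁻¹`. -/
def r₁ : FreeGroup (Fin 3) := a * c * b⁻¹ * a⁻¹ * c⁻¹ * a * c * b * c⁻¹
/-- The relator `r₂ = a·a·b⁻¹·c·b·a·b·c⁻¹`. -/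
def r₂ : FreeGroup (Fin 3) := a * a * b⁻¹ * c * b * a * b * c⁻¹
/-- The relator `r₃ = a·b·a⁻¹·b⁻¹·c·c`. -/
def r₃ : FreeGroup (Fin 3) := a * b * a⁻¹ * b⁻¹ * c * c

abbrev rels : Set (FreeGroup (Fin 3)) := {r₁, r₂, r₃, a, b ^ 3}

def fgen : Fin 3 → DihedralGroup 3 := ![.r 0, .r 1, .sr 0]

lemma lift_rels : ∀ r ∈ rels, FreeGroup.lift fgen r = 1 := by
  intro r hr
  simp only [rels, Set.mem_insert_iff, Set.mem_singleton_iff] at hr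
  rcases hr with rfl | rfl | rfl | rfl | rfl <;>
    simp only [r₁, r₂, r₃, a, b, c, map_mul, map_inv, map_pow, FreeGroup.lift_apply_of, fgen] <;>
    decide

def F : PresentedGroup rels →* DihedralGroup 3 := PresentedGroup.toGroup lift_rels

def A : PresentedGroup rels := PresentedGroup.of 0
def B : PresentedGroup rels := PresentedGroup.of 1
def C : PresentedGroup rels := PresentedGroup.of 2

lemma mk_rel {r : FreeGroup (Fin 3)} (h : r ∈ rels) : PresentedGroup.mk rels r = 1 :=
  (QuotientGroup.eq_one_iff _).2 (Subgroup.subset_normalClosure h)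

lemma hA : A = 1 := mk_rel (r := a) (by simp [rels])

lemma hB3 : B ^ 3 = 1 := by
  have := mk_rel (r := b ^ 3) (by simp [rels])
  simpa [b, map_pow, B, PresentedGroup.of] using this

lemma hC2 : C * C = 1 := by
  have := mk_rel (r := r₃) (by simp [rels])
  simp only [r₃, map_mul, map_inv, a, b, c] at this
  have hA' : (PresentedGroup.mk rels (FreeGroup.of 0)) = A := rfl
  rw [hA'] at this
  simpa [hA, B, C, PresentedGroup.of] using this

lemma hCBB : C * B * B = B * C := by
  have := mk_rel (r := r₂) (by simp [rels])
  simp only [r₂, map_mul, map_inv, a, b, c] at this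
  have hA' : (PresentedGroup.mk rels (FreeGroup.of 0)) = A := rfl
  rw [hA'] at this
  have h : B⁻¹ * C * B * B * C⁻¹ = 1 := by simpa [hA, B, C, PresentedGroup.of] using this
  have h2 : C * B * B = B * C := by
    have := congrArg (fun x => B * x * C) h
    simpa [mul_assoc] using this
  exact h2

lemma hCB : C * B = B * B * C := by
  have h3 : B * (B * (B * 1)) = 1 := by
    have := hB3; rwa [pow_succ, pow_succ, pow_succ, pow_zero, one_mul, mul_assoc,
      ← mul_one (B * (B * B))] at this
  calc C * B = C * B * (B * (B * (B * 1))) := by rw [h3, mul_one]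
    _ = (C * B * B) * (B * B) := by group
    _ = B * C * (B * B) := by rw [hCBB]
    _ = B * (C * B * B) := by group
    _ = B * (B * C) := by rw [hCBB]
    _ = B * B * C := by group

lemma hBpow {m n : ℕ} (h : m % 3 = n % 3) : B ^ m = B ^ n := by
  rw [← Nat.div_add_mod m 3, ← Nat.div_add_mod n 3, h, pow_add, pow_add,
    pow_mul, pow_mul, hB3, one_pow, one_pow]

lemma hCpow (k : ℕ) : C * B ^ k = B ^ (2 * k) * C := by
  induction k with
  | zero => simp
  | succ n ih =>
    rw [pow_succ, ← mul_assoc, ih, mul_assoc, hCB]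
    rw [show 2 * (n + 1) = 2 * n + 1 + 1 by ring, pow_succ, pow_succ]
    group

lemma hCpow' (k : ℕ) : B ^ k * C = C * B ^ (2 * k) := by
  rw [hCpow, hBpow (m := 2 * (2 * k)) (n := k) (by omega)]

def gfun : DihedralGroup 3 → PresentedGroup rels
  | .r i => B ^ i.val
  | .sr i => C * B ^ i.val

lemma val_fact1 : ∀ i j : ZMod 3, (i + j).val % 3 = (i.val + j.val) % 3 := by decide
lemma val_fact2 : ∀ i j : ZMod 3, (j - i).val % 3 = (2 * i.val + j.val) % 3 := by decide

def G : DihedralGroup 3 →* PresentedGroup rels where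
  toFun := gfun
  map_one' := by show gfun (.r 0) = 1; simp [gfun]
  map_mul' x y := by
    rcases x with i | i <;> rcases y with j | j
    · show B ^ (i + j).val = B ^ i.val * B ^ j.val
      rw [← pow_add]; exact hBpow (val_fact1 i j)
    · show C * B ^ (j - i).val = B ^ i.val * (C * B ^ j.val)
      rw [← mul_assoc, hCpow', mul_assoc, ← pow_add]
      exact congrArg (C * ·) (hBpow (val_fact2 i j))
    · show C * B ^ (i + j).val = C * B ^ i.val * B ^ j.val
      rw [mul_assoc, ← pow_add]
      exact congrArg (C * ·) (hBpow (val_fact1 i j))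
    · show B ^ (j - i).val = C * B ^ i.val * (C * B ^ j.val)
      rw [mul_assoc, ← mul_assoc (B ^ i.val), hCpow', ← mul_assoc, ← mul_assoc, hC2,
        one_mul, ← pow_add]
      exact hBpow (val_fact2 i j)

lemma FB : F B = DihedralGroup.r 1 := PresentedGroup.toGroup.of lift_rels
lemma FC : F C = DihedralGroup.sr 0 := PresentedGroup.toGroup.of lift_rels

lemma hGF : G.comp F = MonoidHom.id _ := by
  apply PresentedGroup.ext
  intro x
  fin_cases x
  · show G (F A) = A
    rw [hA, map_one, map_one]
  · show G (F B) = B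
    rw [FB]
    show B ^ (1 : ZMod 3).val = B
    rw [ZMod.val_one, pow_one]
  · show G (F C) = C
    rw [FC]
    show C * B ^ (0 : ZMod 3).val = C
    rw [ZMod.val_zero, pow_zero, mul_one]

lemma hFG : F.comp G = MonoidHom.id _ := by
  ext x
  rcases x with i | i
  · show F (B ^ i.val) = DihedralGroup.r i
    rw [map_pow, FB, DihedralGroup.r_one_pow, ZMod.natCast_val, ZMod.cast_id]
  · show F (C * B ^ i.val) = DihedralGroup.sr i
    rw [map_mul, map_pow, FB, FC, DihedralGroup.r_one_pow, DihedralGroup.sr_mul_r,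
      ZMod.natCast_val, ZMod.cast_id, zero_add]

/-- Adding the relations `a = 1` and `b³ = 1` to the presentation
`⟨a,b,c | r₁, r₂, r₃⟩` yields the dihedral group of order 6. -/
theorem presented_group_with_extra_relations_iso_dihedral :
    Nonempty
      (PresentedGroup ({r₁, r₂, r₃, a, b ^ 3} : Set (FreeGroup (Fin 3))) ≃*
        DihedralGroup 3) :=
  ⟨MonoidHom.toMulEquiv F G hGF hFG⟩

end Stmt0
end

section
/- For all nonnegative integers p, q, r, let L be the 4×4 integer matrix with rows (0,1,1,1), (1,p,0,0), (1,0,q,0), (1,0,0,r). Then the cardinality (Nat.card) of the quotient of ℤ⁴ by the image of the linear map v ↦ L·v equals pq + qr + rp. (When pq + qr + rp = 0 the quotient is infinite and its Nat.card is 0, so the equality holds in all cases.) -/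
open Matrix

lemma card_quot_mulVecLin {n : ℕ} (A : Matrix (Fin n) (Fin n) ℤ) :
    Nat.card ((Fin n → ℤ) ⧸ LinearMap.range A.mulVecLin) = A.det.natAbs := by
  classical
  set N := LinearMap.range A.mulVecLin with hN
  by_cases hd : A.det = 0
  · rw [hd, Int.natAbs_zero]
    obtain ⟨w, hw0, hw⟩ := (Matrix.exists_vecMul_eq_zero_iff).2 hd
    obtain ⟨i, hi⟩ : ∃ i, w i ≠ 0 := by
      by_contra h
      push_neg at h
      exact hw0 (funext h)
    have hinj : Function.Injective
        (fun k : ℤ => Submodule.Quotient.mk (p := N) (k • Pi.single i 1)) := by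
      intro k l hkl
      rw [Submodule.Quotient.eq] at hkl
      obtain ⟨v, hv⟩ := hkl
      have h2 : w ⬝ᵥ (A.mulVecLin v) = w ⬝ᵥ (k • Pi.single i 1 - l • Pi.single i 1) := by
        rw [hv]
      rw [Matrix.mulVecLin_apply, Matrix.dotProduct_mulVec, hw, zero_dotProduct,
        dotProduct_sub, dotProduct_smul, dotProduct_smul,
        dotProduct_single, mul_one, smul_eq_mul, smul_eq_mul] at h2
      have h3 : w i * k = w i * l := by linarith
      exact mul_left_cancel₀ hi h3
    haveI : Infinite ((Fin n → ℤ) ⧸ N) := Infinite.of_injective _ hinj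
    exact Nat.card_eq_zero_of_infinite
  · have hinj : Function.Injective A.mulVecLin := by
      intro x y hxy
      by_contra hne
      apply hd
      rw [← Matrix.exists_mulVec_eq_zero_iff]
      exact ⟨x - y, sub_ne_zero.mpr hne, by
        rw [← Matrix.mulVecLin_apply, map_sub, hxy, sub_self]⟩
    let e1 : (Fin n → ℤ) ≃ₗ[ℤ] N := LinearEquiv.ofInjective A.mulVecLin hinj
    obtain ⟨m, snf⟩ := Submodule.smithNormalForm (Pi.basisFun ℤ (Fin n)) N
    have hmn : n = m := by
      have e3 : Fin m ≃ Fin n :=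
        Module.Basis.indexEquiv snf.bN ((Pi.basisFun ℤ (Fin n)).map e1)
      simpa using (Fintype.card_congr e3).symm
    subst hmn
    have hcardidx : Nat.card ((Fin n → ℤ) ⧸ N) = N.toAddSubgroup.index := rfl
    rw [hcardidx, snf.toAddSubgroup_index_eq_ite, if_pos (by simp)]
    -- now compute the product
    let σ : Fin n ≃ Fin n := Equiv.ofBijective snf.f
      ((Finite.injective_iff_bijective).mp snf.f.injective)
    have hprod : ∏ i : Fin n, (Ideal.span {snf.a i}).toAddSubgroup.index
        = ∏ i : Fin n, (snf.a i).natAbs := by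
      simp [Ideal.span_singleton_toAddSubgroup_eq_zmultiples, Int.index_zmultiples]
    rw [hprod]
    -- det computation
    let e2 : (Fin n → ℤ) ≃ₗ[ℤ] N := snf.bM.equiv snf.bN σ.symm
    have hassoc : Associated (LinearMap.det ((N.subtype).comp (e1 : (Fin n → ℤ) →ₗ[ℤ] N)))
        (LinearMap.det ((N.subtype).comp (e2 : (Fin n → ℤ) →ₗ[ℤ] N))) :=
      LinearMap.associated_det_comp_equiv _ _ _
    have h1 : (N.subtype).comp (e1 : (Fin n → ℤ) →ₗ[ℤ] N) = A.mulVecLin := by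
      ext x
      rfl
    have h2 : LinearMap.det ((N.subtype).comp (e2 : (Fin n → ℤ) →ₗ[ℤ] N))
        = ∏ i : Fin n, snf.a i := by
      have hg : ∀ j, ((N.subtype).comp (e2 : (Fin n → ℤ) →ₗ[ℤ] N)) (snf.bM j)
          = (snf.a (σ.symm j)) • snf.bM j := by
        intro j
        have h3 : e2 (snf.bM j) = snf.bN (σ.symm j) := snf.bM.equiv_apply _ snf.bN σ.symm
        have h4 : snf.f (σ.symm j) = j := σ.apply_symm_apply j
        show (e2 (snf.bM j) : Fin n → ℤ) = _
        rw [h3, snf.snf, h4]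
      rw [← LinearMap.det_toMatrix snf.bM]
      have hM : LinearMap.toMatrix snf.bM snf.bM ((N.subtype).comp (e2 : (Fin n → ℤ) →ₗ[ℤ] N))
          = Matrix.diagonal (fun j => snf.a (σ.symm j)) := by
        ext i j
        rw [LinearMap.toMatrix_apply, hg, _root_.map_smul, Module.Basis.repr_self,
          Finsupp.smul_single, smul_eq_mul, mul_one]
        by_cases h : i = j
        · rw [h, Matrix.diagonal_apply_eq, Finsupp.single_eq_same]
        · rw [Matrix.diagonal_apply_ne _ h, Finsupp.single_eq_of_ne h]
      rw [hM, Matrix.det_diagonal]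
      exact Equiv.prod_comp σ.symm snf.a
    have h5 : LinearMap.det (A.mulVecLin) = A.det := by
      rw [← Matrix.toLin'_apply', LinearMap.det_toLin']
    have : A.det.natAbs = (∏ i : Fin n, snf.a i).natAbs := by
      rw [← h5, ← h1, ← h2]
      exact Int.natAbs_eq_iff_associated.mpr hassoc
    rw [this]
    exact (map_prod Int.natAbsHom snf.a Finset.univ).symm


/-- The order of the quotient of `ℤ⁴` by the image of the linear map given by
the linking matrix of the surgery diagram for the 3-manifold supported by the
pair-of-pants open book `(P, τ₀^p τ₁^q τ₂^r)` is `pq + qr + rp` (with the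
convention that `Nat.card` of an infinite group is `0`). -/
theorem card_quotient_linking_matrix (p q r : ℕ) :
    Nat.card
        ((Fin 4 → ℤ) ⧸ LinearMap.range
          (Matrix.mulVecLin
            !![0, 1, 1, 1; 1, (p : ℤ), 0, 0; 1, 0, (q : ℤ), 0; 1, 0, 0, (r : ℤ)])) =
      p * q + q * r + r * p := by
  rw [card_quot_mulVecLin]
  have h : (!![0, 1, 1, 1; 1, (p : ℤ), 0, 0; 1, 0, (q : ℤ), 0; 1, 0, 0, (r : ℤ)]).det
      = -((p * q + q * r + r * p : ℕ) : ℤ) := by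
    rw [Matrix.det_succ_row_zero]
    simp [Fin.sum_univ_succ, Matrix.det_fin_three, Fin.succAbove, Fin.castSucc, Fin.castAdd, Fin.castLE]
    ring
  rw [h, Int.natAbs_neg, Int.natAbs_natCast]
end
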